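/- Quasi-completeness of nominal rewriting: if the rewrite theory R is a presentation of the equational theory T, and Δ ⊢_T s = t is derivable in nominal algebra, then there exists a freshness context Γ whose atoms do not occur in atms(Δ, s, t) such that Δ ∪ Γ ⊢_R s ↔* t (s and t are joined by the symmetric rewrite relation in the extended context). -/

import Mathlib

/-! Nominal terms: atoms, permutations, terms, actions, freshness, α-equivalence,
nominal rewriting and nominal algebra, closed rewriting. -/

abbrev Atom := ℕ
abbrev Unknown := ℕ

/-- Finitely supported permutations of atoms. -/
def FinPerm := {π : Equiv.Perm Atom // {a | π a ≠ a}.Finite}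

namespace FinPerm

instance : CoeFun FinPerm (fun _ => Atom → Atom) := ⟨fun π => π.1⟩

def id : FinPerm := ⟨Equiv.refl Atom, by simp⟩

/-- `comp π π'` is `π ∘ π'` (first apply `π'`, then `π`). -/
def comp (π π' : FinPerm) : FinPerm :=
  ⟨π'.1.trans π.1, ((π.2.union π'.2).subset (by
    intro a ha
    simp only [Set.mem_setOf_eq, Equiv.trans_apply] at ha
    by_cases h : π'.1 a = a
    · exact Or.inl (by simpa [h] using ha)
    · exact Or.inr h))⟩

def inv (π : FinPerm) : FinPerm :=
  ⟨π.1.symm, π.2.subset (by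
    intro a ha h
    exact ha (π.1.symm_apply_eq.mpr h.symm))⟩

def swap (a b : Atom) : FinPerm :=
  ⟨Equiv.swap a b, (Set.toFinite {a, b}).subset (by
    intro c hc
    by_contra h
    simp only [Set.mem_insert_iff, Set.mem_singleton_iff, not_or] at h
    exact hc (Equiv.swap_apply_of_ne_of_ne h.1 h.2))⟩

/-- The (finite) set of atoms moved by `π`. -/
noncomputable def nontriv (π : FinPerm) : Finset Atom := π.2.toFinset

end FinPerm

/-- Nominal terms: atoms, moderated unknowns `π·X`, abstractions `[a]t`,
and term-formers applied to lists of arguments. -/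
inductive Term : Type where
  | atom : Atom → Term
  | var  : FinPerm → Unknown → Term
  | abs  : Atom → Term → Term
  | app  : ℕ → List Term → Term

/-- Permutation action on terms. -/
def permAct (π : FinPerm) : Term → Term
  | .atom a => .atom (π a)
  | .var π' X => .var (π.comp π') X
  | .abs a t => .abs (π a) (permAct π t)
  | .app f ts => .app f (ts.attach.map fun t => permAct π t.1)
decreasing_by
  all_goals simp_wf
  have := List.sizeOf_lt_of_mem t.2
  omega

/-- Substitutions, represented as total maps (the default value of `X` is `id·X`). -/
def Subst := Unknown → Term

/-- A substitution has finite domain. -/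
def Subst.FinDom (σ : Subst) : Prop := {X | σ X ≠ .var FinPerm.id X}.Finite

/-- Substitution action on terms. -/
def subst (σ : Subst) : Term → Term
  | .atom a => .atom a
  | .var π X => permAct π (σ X)
  | .abs a t => .abs a (subst σ t)
  | .app f ts => .app f (ts.attach.map fun t => subst σ t.1)
decreasing_by
  all_goals simp_wf
  have := List.sizeOf_lt_of_mem t.2
  omega

/-- Composition of substitutions: `(σ.comp θ) X = (Xσ)θ`. -/
def Subst.comp (σ θ : Subst) : Subst := fun X => subst θ (σ X)

/-- `σ∘π`, mapping `X` to `π·(σ X)`. -/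
def Subst.permComp (σ : Subst) (π : FinPerm) : Subst := fun X => permAct π (σ X)

mutual
/-- Atoms occurring in a term. -/
noncomputable def atmsF : Term → Finset Atom
  | .atom a => {a}
  | .var π _ => π.nontriv
  | .abs a t => insert a (atmsF t)
  | .app _ ts => atmsLF ts
noncomputable def atmsLF : List Term → Finset Atom
  | [] => ∅
  | t :: ts => atmsF t ∪ atmsLF ts
end

mutual
/-- Unknowns occurring in a term. -/
def unknF : Term → Finset Unknown
  | .atom _ => ∅
  | .var _ X => {X}
  | .abs _ t => unknF t
  | .app _ ts => unknLF ts
def unknLF : List Term → Finset Unknown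
  | [] => ∅
  | t :: ts => unknF t ∪ unknLF ts
end

/-- Freshness contexts: finite sets of primitive constraints `a#X`. -/
abbrev Ctx := Finset (Atom × Unknown)

def ctxAtoms (Δ : Ctx) : Finset Atom := Δ.image Prod.fst
def ctxUnkns (Δ : Ctx) : Finset Unknown := Δ.image Prod.snd

/-- Derivable freshness judgements `Δ ⊢ a # t`. -/
inductive Fresh (Δ : Ctx) : Atom → Term → Prop where
  | atom {a b} : a ≠ b → Fresh Δ a (.atom b)
  | var {a π X} : (π.inv a, X) ∈ Δ → Fresh Δ a (.var π X)
  | absSame {a t} : Fresh Δ a (.abs a t)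
  | absDiff {a b t} : a ≠ b → Fresh Δ a t → Fresh Δ a (.abs b t)
  | app {a f ts} : (∀ t ∈ ts, Fresh Δ a t) → Fresh Δ a (.app f ts)

/-- Derivable α-equivalence judgements `Δ ⊢ s ≈α t`. -/
inductive Aeq (Δ : Ctx) : Term → Term → Prop where
  | atom {a} : Aeq Δ (.atom a) (.atom a)
  | var {π π' : FinPerm} {X : Unknown} : (∀ a : Atom, (π : Atom → Atom) a ≠ (π' : Atom → Atom) a → (a, X) ∈ Δ) →
      Aeq Δ (.var π X) (.var π' X)
  | absSame {a t u} : Aeq Δ t u → Aeq Δ (.abs a t) (.abs a u)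
  | absDiff {a b t u} : a ≠ b → Fresh Δ b t → Aeq Δ (permAct (FinPerm.swap b a) t) u →
      Aeq Δ (.abs a t) (.abs b u)
  | app {f ts us} : ts.length = us.length → (∀ p ∈ ts.zip us, Aeq Δ p.1 p.2) →
      Aeq Δ (.app f ts) (.app f us)

/-- Subterm relation. -/
inductive Subterm : Term → Term → Prop where
  | refl (t) : Subterm t t
  | abs {s t a} : Subterm s t → Subterm s (.abs a t)
  | app {s t f ts} : t ∈ ts → Subterm s t → Subterm s (.app f ts)

mutual
/-- Number of occurrences of the unknown `X` in a term. -/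
def countUnk (X : Unknown) : Term → ℕ
  | .atom _ => 0
  | .var _ Y => if Y = X then 1 else 0
  | .abs _ t => countUnk X t
  | .app _ ts => countUnkL X ts
def countUnkL (X : Unknown) : List Term → ℕ
  | [] => 0
  | t :: ts => countUnk X t + countUnkL X ts
end

/-- A position: a term with a distinguished unknown occurring exactly once, as `id·X`. -/
structure Position where
  ctx : Term
  hole : Unknown
  once : countUnk hole ctx = 1
  idOnly : ∀ π : FinPerm, Subterm (.var π hole) ctx → π = FinPerm.id

def fillAux (X : Unknown) (u : Term) : Term → Term
  | .atom a => .atom a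
  | .var π Y => if Y = X then u else .var π Y
  | .abs a t => .abs a (fillAux X u t)
  | .app f ts => .app f (ts.attach.map fun t => fillAux X u t.1)
decreasing_by
  all_goals simp_wf
  have := List.sizeOf_lt_of_mem t.2
  omega

/-- `C[u]`: place `u` in the hole of the position `C`. -/
def Position.fill (C : Position) (u : Term) : Term := fillAux C.hole u C.ctx

/-- A rule `∇ ⊢ l → r` (also used for axioms `∇ ⊢ l = r`). -/
structure Rule where
  ctx : Ctx
  lhs : Term
  rhs : Term

noncomputable def Rule.atms (R : Rule) : Finset Atom := ctxAtoms R.ctx ∪ atmsF R.lhs ∪ atmsF R.rhs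
def Rule.unkn (R : Rule) : Finset Unknown := ctxUnkns R.ctx ∪ unknF R.lhs ∪ unknF R.rhs

/-- `Δ ⊢ ∇θ`: every constraint of `∇`, instantiated by `θ`, is derivable from `Δ`. -/
def FreshSubst (Δ N : Ctx) (θ : Subst) : Prop :=
  ∀ p ∈ N, Fresh Δ p.1 (subst θ (.var FinPerm.id p.2))

/-- One-step nominal rewriting with the rule `R` in context `Δ`. -/
def OneStepR (R : Rule) (Δ : Ctx) (s t : Term) : Prop :=
  ∃ (C : Position) (s' : Term) (π : FinPerm) (θ : Subst),
    s = C.fill s' ∧ FreshSubst Δ R.ctx θ ∧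
    Aeq Δ s' (permAct π (subst θ R.lhs)) ∧
    Aeq Δ (C.fill (permAct π (subst θ R.rhs))) t

def OneStep (Rw : Set Rule) (Δ : Ctx) (s t : Term) : Prop := ∃ R ∈ Rw, OneStepR R Δ s t

/-- `Δ ⊢_R s ↔* t`: the reflexive-symmetric-transitive closure, including
α-equivalence, of one-step rewriting. -/
inductive RewEq (Rw : Set Rule) (Δ : Ctx) : Term → Term → Prop where
  | step {s t} : OneStep Rw Δ s t → RewEq Rw Δ s t
  | alpha {s t} : Aeq Δ s t → RewEq Rw Δ s t
  | symm {s t} : RewEq Rw Δ s t → RewEq Rw Δ t s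
  | trans {s t u} : RewEq Rw Δ s t → RewEq Rw Δ t u → RewEq Rw Δ s u

/-- Atoms of a judgement `(Δ, s, t)`. -/
noncomputable def judgeAtms (Δ : Ctx) (s t : Term) : Finset Atom := ctxAtoms Δ ∪ atmsF s ∪ atmsF t

def judgeUnkn (Δ : Ctx) (s t : Term) : Finset Unknown := ctxUnkns Δ ∪ unknF s ∪ unknF t

/-- `Γ` is a fresh context for a set of atoms `A`: its atoms avoid `A`. -/
def FreshFor (Γ : Ctx) (A : Finset Atom) : Prop := ∀ p ∈ Γ, p.1 ∉ A

/-- Nominal algebra equality `Δ ⊢_T s = t`. -/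
inductive AlgEq (T : Set Rule) (Δ : Ctx) : Term → Term → Prop where
  | axm {s t} (R : Rule) (hR : R ∈ T) (Γ : Ctx) (C : Position) (π : FinPerm) (θ : Subst) :
      FreshFor Γ (judgeAtms Δ s t) →
      FreshSubst (Δ ∪ Γ) R.ctx θ →
      Aeq (Δ ∪ Γ) s (C.fill (permAct π (subst θ R.lhs))) →
      Aeq (Δ ∪ Γ) (C.fill (permAct π (subst θ R.rhs))) t →
      AlgEq T Δ s t
  | refl (s) : AlgEq T Δ s s
  | symm {s t} : AlgEq T Δ s t → AlgEq T Δ t s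
  | trans {s t u} : AlgEq T Δ s t → AlgEq T Δ t u → AlgEq T Δ s u

/-- `Rw` is a presentation of the equational theory `T`. -/
def Presents (Rw : Set Rule) (T : Set Rule) : Prop :=
  ∀ R : Rule, R ∈ T ↔ (R ∈ Rw ∨ Rule.mk R.ctx R.rhs R.lhs ∈ Rw)

/-- Structural renaming of atoms (by a permutation `τ`) and unknowns (by `ρ`). -/
def renameT (τ : FinPerm) (ρ : Unknown → Unknown) : Term → Term
  | .atom a => .atom (τ a)
  | .var π X => .var (τ.comp (π.comp τ.inv)) (ρ X)
  | .abs a t => .abs (τ a) (renameT τ ρ t)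
  | .app f ts => .app f (ts.attach.map fun t => renameT τ ρ t.1)
decreasing_by
  all_goals simp_wf
  have := List.sizeOf_lt_of_mem t.2
  omega

def renameCtx (τ : FinPerm) (ρ : Unknown → Unknown) (Δ : Ctx) : Ctx :=
  Δ.image (fun p => (τ p.1, ρ p.2))

def Rule.rename (τ : FinPerm) (ρ : Unknown → Unknown) (R : Rule) : Rule :=
  ⟨renameCtx τ ρ R.ctx, renameT τ ρ R.lhs, renameT τ ρ R.rhs⟩

/-- `R'` is a freshened variant of `R`, avoiding also the atoms `A` and unknowns `U`. -/
def FreshenedVariant (A : Finset Atom) (U : Finset Unknown) (R R' : Rule) : Prop :=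
  ∃ (τ : FinPerm) (ρ : Equiv.Perm Unknown),
    R' = R.rename τ ρ ∧
    (∀ a ∈ R.atms, τ a ∉ A ∪ R.atms) ∧
    (∀ X ∈ R.unkn, (ρ X) ∉ U ∪ R.unkn)

/-- A rule (or axiom) `∇ ⊢ l → r` is closed: a freshened variant of `∇ ⊢ (l,r)` matches
`∇ ⊢ (l,r)` in the context `∇` extended with `atms(R') # unkn(R)`. -/
def Rule.Closed (R : Rule) : Prop :=
  ∃ R' : Rule, FreshenedVariant ∅ ∅ R R' ∧
    ∃ σ : Subst, (∀ X, X ∉ R'.unkn → σ X = .var FinPerm.id X) ∧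
      FreshSubst (R.ctx ∪ R'.atms ×ˢ R.unkn) R'.ctx σ ∧
      Aeq (R.ctx ∪ R'.atms ×ˢ R.unkn) (subst σ R'.lhs) R.lhs ∧
      Aeq (R.ctx ∪ R'.atms ×ˢ R.unkn) (subst σ R'.rhs) R.rhs

/-- One-step closed rewriting `Δ ⊢ s →c_R t`. -/
def ClosedStepR (R : Rule) (Δ : Ctx) (s t : Term) : Prop :=
  ∃ R' : Rule, FreshenedVariant (judgeAtms Δ s t ∪ R.atms) (judgeUnkn Δ s t ∪ R.unkn) R R' ∧
    ∃ (C : Position) (s' : Term) (θ : Subst),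
      s = C.fill s' ∧
      FreshSubst (Δ ∪ R'.atms ×ˢ judgeUnkn Δ s t) R'.ctx θ ∧
      Aeq (Δ ∪ R'.atms ×ˢ judgeUnkn Δ s t) s' (subst θ R'.lhs) ∧
      Aeq (Δ ∪ R'.atms ×ˢ judgeUnkn Δ s t) (C.fill (subst θ R'.rhs)) t

def ClosedStep (Rw : Set Rule) (Δ : Ctx) (s t : Term) : Prop := ∃ R ∈ Rw, ClosedStepR R Δ s t

/-- `Δ ⊢_R s ↔c* t`: reflexive-symmetric-transitive closure, including α-equivalence,
of one-step closed rewriting. -/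
inductive ClosedRewEq (Rw : Set Rule) (Δ : Ctx) : Term → Term → Prop where
  | step {s t} : ClosedStep Rw Δ s t → ClosedRewEq Rw Δ s t
  | alpha {s t} : Aeq Δ s t → ClosedRewEq Rw Δ s t
  | symm {s t} : ClosedRewEq Rw Δ s t → ClosedRewEq Rw Δ t s
  | trans {s t u} : ClosedRewEq Rw Δ s t → ClosedRewEq Rw Δ t u → ClosedRewEq Rw Δ s u



namespace FinPerm
theorem ext {π π' : FinPerm} (h : ∀ a, (π : Atom → Atom) a = π' a) : π = π' :=
  Subtype.ext (Equiv.ext h)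

@[simp] theorem id_apply (a : Atom) : (FinPerm.id : Atom → Atom) a = a := rfl
@[simp] theorem comp_apply (π π' : FinPerm) (a : Atom) :
    (π.comp π' : Atom → Atom) a = π (π' a) := rfl
@[simp] theorem inv_apply_apply (π : FinPerm) (a : Atom) :
    (π.inv : Atom → Atom) (π a) = a := π.1.symm_apply_apply a
@[simp] theorem apply_inv_apply (π : FinPerm) (a : Atom) :
    (π : Atom → Atom) (π.inv a) = a := π.1.apply_symm_apply a
theorem apply_injective (π : FinPerm) : Function.Injective (π : Atom → Atom) :=
  π.1.injective

@[simp] theorem id_comp (π : FinPerm) : FinPerm.id.comp π = π := ext fun a => rfl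
@[simp] theorem comp_id (π : FinPerm) : π.comp FinPerm.id = π := ext fun a => rfl

theorem mem_nontriv {π : FinPerm} {a : Atom} : a ∈ π.nontriv ↔ (π : Atom → Atom) a ≠ a :=
  Set.Finite.mem_toFinset _

/-- conjugation of a swap -/
theorem comp_swap (τ : FinPerm) (a b : Atom) :
    τ.comp ((swap a b).comp τ.inv) = swap (τ a) (τ b) := by
  apply ext
  intro x
  show (τ : Atom → Atom) (Equiv.swap a b ((τ.inv : Atom → Atom) x)) = Equiv.swap (τ a) (τ b) x
  rcases eq_or_ne x (τ a) with rfl | hxa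
  · simp [Equiv.swap_apply_left]
  rcases eq_or_ne x (τ b) with rfl | hxb
  · simp [Equiv.swap_apply_right]
  have h1 : (τ.inv : Atom → Atom) x ≠ a := by
    intro h; apply hxa; rw [← h]; simp
  have h2 : (τ.inv : Atom → Atom) x ≠ b := by
    intro h; apply hxb; rw [← h]; simp
  rw [show (Equiv.swap a b) ((τ.inv : Atom → Atom) x) = (τ.inv : Atom → Atom) x from
    Equiv.swap_apply_of_ne_of_ne h1 h2]
  rw [Equiv.swap_apply_of_ne_of_ne hxa hxb]
  simp

/-- a perm fixing the support of π commutes past it -/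
theorem conj_eq_self {τ π : FinPerm} (h : ∀ a ∈ π.nontriv, (τ : Atom → Atom) a = a) :
    τ.comp (π.comp τ.inv) = π := by
  apply ext
  intro x
  simp only [comp_apply]
  have hfix : ∀ a, (π : Atom → Atom) a ≠ a → (τ : Atom → Atom) a = a := by
    intro a ha; exact h a (mem_nontriv.mpr ha)
  by_cases hx : (π : Atom → Atom) x = x
  · have hy : (π : Atom → Atom) ((τ.inv : Atom → Atom) x) = (τ.inv : Atom → Atom) x := by
      by_contra hy'
      have h1 := hfix _ hy'
      have h2 : (τ : Atom → Atom) ((τ.inv : Atom → Atom) x) = x := by simp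
      rw [h1] at h2
      rw [h2] at hy'
      exact hy' hx
    rw [hy]; simp [hx]
  · have hτx : (τ : Atom → Atom) x = x := hfix _ hx
    have hτix : (τ.inv : Atom → Atom) x = x := by
      conv_lhs => rw [← hτx]
      simp
    rw [hτix]
    have : (π : Atom → Atom) ((π : Atom → Atom) x) ≠ (π : Atom → Atom) x := by
      intro hc; exact hx (π.apply_injective hc)
    rw [hfix _ this]
end FinPerm

/-! ### Term action simp lemmas -/

@[simp] theorem permAct_atom (π : FinPerm) (a : Atom) : permAct π (.atom a) = .atom (π a) := by
  rw [permAct]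
@[simp] theorem permAct_var (π π' : FinPerm) (X : Unknown) :
    permAct π (.var π' X) = .var (π.comp π') X := by rw [permAct]
@[simp] theorem permAct_abs (π : FinPerm) (a : Atom) (t : Term) :
    permAct π (.abs a t) = .abs (π a) (permAct π t) := by rw [permAct]
@[simp] theorem permAct_app (π : FinPerm) (f : ℕ) (ts : List Term) :
    permAct π (.app f ts) = .app f (ts.map (permAct π)) := by
  rw [permAct]; rw [List.attach_map_val]

@[simp] theorem subst_atom (θ : Subst) (a : Atom) : subst θ (.atom a) = .atom a := by rw [subst]
@[simp] theorem subst_var (θ : Subst) (π : FinPerm) (X : Unknown) :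
    subst θ (.var π X) = permAct π (θ X) := by rw [subst]
@[simp] theorem subst_abs (θ : Subst) (a : Atom) (t : Term) :
    subst θ (.abs a t) = .abs a (subst θ t) := by rw [subst]
@[simp] theorem subst_app (θ : Subst) (f : ℕ) (ts : List Term) :
    subst θ (.app f ts) = .app f (ts.map (subst θ)) := by
  rw [subst]; rw [List.attach_map_val]

@[simp] theorem renameT_atom (τ : FinPerm) (ρ : Unknown → Unknown) (a : Atom) :
    renameT τ ρ (.atom a) = .atom (τ a) := by rw [renameT]
@[simp] theorem renameT_var (τ : FinPerm) (ρ : Unknown → Unknown) (π : FinPerm) (X : Unknown) :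
    renameT τ ρ (.var π X) = .var (τ.comp (π.comp τ.inv)) (ρ X) := by rw [renameT]
@[simp] theorem renameT_abs (τ : FinPerm) (ρ : Unknown → Unknown) (a : Atom) (t : Term) :
    renameT τ ρ (.abs a t) = .abs (τ a) (renameT τ ρ t) := by rw [renameT]
@[simp] theorem renameT_app (τ : FinPerm) (ρ : Unknown → Unknown) (f : ℕ) (ts : List Term) :
    renameT τ ρ (.app f ts) = .app f (ts.map (renameT τ ρ)) := by
  rw [renameT]; rw [List.attach_map_val]

@[simp] theorem fillAux_atom (X : Unknown) (u : Term) (a : Atom) :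
    fillAux X u (.atom a) = .atom a := by rw [fillAux]
theorem fillAux_var (X : Unknown) (u : Term) (π : FinPerm) (Y : Unknown) :
    fillAux X u (.var π Y) = if Y = X then u else .var π Y := by rw [fillAux]
@[simp] theorem fillAux_abs (X : Unknown) (u : Term) (a : Atom) (t : Term) :
    fillAux X u (.abs a t) = .abs a (fillAux X u t) := by rw [fillAux]
@[simp] theorem fillAux_app (X : Unknown) (u : Term) (f : ℕ) (ts : List Term) :
    fillAux X u (.app f ts) = .app f (ts.map (fillAux X u)) := by
  rw [fillAux]; rw [List.attach_map_val]

/-! ### Term equational lemmas -/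

theorem permAct_id : ∀ t : Term, permAct FinPerm.id t = t
  | .atom a => by simp
  | .var π X => by simp
  | .abs a t => by simp [permAct_id t]
  | .app f ts => by
      simp only [permAct_app]
      rw [List.map_congr_left (fun t ht => permAct_id t)]
      simp
decreasing_by
  all_goals simp_wf
  have := List.sizeOf_lt_of_mem ht
  omega

theorem permAct_comp (π π' : FinPerm) : ∀ t : Term,
    permAct π (permAct π' t) = permAct (π.comp π') t
  | .atom a => by simp
  | .var π₀ X => by
      simp only [permAct_var]
      congr 1
      all_goals (apply FinPerm.ext; intro a; simp)
  | .abs a t => by simp [permAct_comp π π' t]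
  | .app f ts => by
      simp only [permAct_app, List.map_map]
      congr 1
      exact List.map_congr_left (fun t ht => permAct_comp π π' t)
decreasing_by
  all_goals simp_wf
  have := List.sizeOf_lt_of_mem ht
  omega

theorem renameT_permAct (τ : FinPerm) (ρ : Unknown → Unknown) (π : FinPerm) : ∀ t : Term,
    renameT τ ρ (permAct π t) = permAct (τ.comp (π.comp τ.inv)) (renameT τ ρ t)
  | .atom a => by simp
  | .var π₀ X => by
      simp only [permAct_var, renameT_var]
      congr 1
      apply FinPerm.ext
      intro a
      simp
  | .abs a t => by
      simp [renameT_permAct τ ρ π t]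
  | .app f ts => by
      simp only [permAct_app, renameT_app, List.map_map]
      congr 1
      exact List.map_congr_left (fun t ht => renameT_permAct τ ρ π t)
decreasing_by
  all_goals simp_wf
  have := List.sizeOf_lt_of_mem ht
  omega

theorem renameT_subst (τ : FinPerm) (ρ : Unknown → Unknown) (θ : Subst) : ∀ t : Term,
    renameT τ ρ (subst θ t) =
      permAct τ (subst (fun X => permAct τ.inv (renameT τ ρ (θ X))) t)
  | .atom a => by simp [subst_atom (fun X => permAct τ.inv (renameT τ ρ (θ X)))]
  | .var π X => by
      simp only [subst_var, renameT_permAct, permAct_comp,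
        subst_var (fun X => permAct τ.inv (renameT τ ρ (θ X)))]
  | .abs a t => by simp [renameT_subst τ ρ θ t, subst_abs (fun X => permAct τ.inv (renameT τ ρ (θ X)))]
  | .app f ts => by
      simp only [subst_app, renameT_app, permAct_app, List.map_map,
        subst_app (fun X => permAct τ.inv (renameT τ ρ (θ X)))]
      congr 1
      exact List.map_congr_left (fun t ht => renameT_subst τ ρ θ t)
decreasing_by
  all_goals simp_wf
  have := List.sizeOf_lt_of_mem ht
  omega

theorem renameT_fillAux (τ : FinPerm) (X : Unknown) (u : Term) : ∀ c : Term,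
    renameT τ _root_.id (fillAux X u c) = fillAux X (renameT τ _root_.id u) (renameT τ _root_.id c)
  | .atom a => by simp
  | .var π Y => by
      rw [fillAux_var]
      by_cases h : Y = X
      · simp [h, fillAux_var]
      · simp [h, fillAux_var]
  | .abs a t => by simp [renameT_fillAux τ X u t]
  | .app f ts => by
      simp only [fillAux_app, renameT_app, List.map_map]
      congr 1
      exact List.map_congr_left (fun t ht => renameT_fillAux τ X u t)
decreasing_by
  all_goals simp_wf
  have := List.sizeOf_lt_of_mem ht
  omega

@[simp] theorem atmsF_atom (a : Atom) : atmsF (.atom a) = {a} := by rw [atmsF]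
@[simp] theorem atmsF_var (π : FinPerm) (X : Unknown) : atmsF (.var π X) = π.nontriv := by rw [atmsF]
@[simp] theorem atmsF_abs (a : Atom) (t : Term) : atmsF (.abs a t) = insert a (atmsF t) := by rw [atmsF]
@[simp] theorem atmsF_app (f : ℕ) (ts : List Term) : atmsF (.app f ts) = atmsLF ts := by rw [atmsF]

theorem renameT_fix (τ : FinPerm) : ∀ t : Term, (∀ a ∈ atmsF t, (τ : Atom → Atom) a = a) →
    renameT τ _root_.id t = t
  | .atom a, h => by simp [h a (by simp)]
  | .var π X, h => by
      simp only [renameT_var, atmsF_var] at *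
      rw [FinPerm.conj_eq_self h]
      rfl
  | .abs a t, h => by
      simp only [renameT_abs, atmsF_abs] at *
      rw [h a (by simp), renameT_fix τ t (fun b hb => h b (Finset.mem_insert_of_mem hb))]
  | .app f ts, h => by
      simp only [renameT_app, atmsF_app] at *
      have key : ∀ t ∈ ts, renameT τ _root_.id t = t := by
        intro t ht
        apply renameT_fix τ t
        intro b hb
        apply h
        clear h
        induction ts with
        | nil => simp at ht
        | cons u us ih =>
            rw [atmsLF]
            rcases List.mem_cons.mp ht with rfl | ht'
            · exact Finset.mem_union_left _ hb
            · exact Finset.mem_union_right _ (ih ht')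
      rw [List.map_congr_left key]
      simp
decreasing_by
  all_goals simp_wf
  all_goals first
    | omega
    | (have := List.sizeOf_lt_of_mem ht; omega)

theorem countUnkL_congr (X : Unknown) (f : Term → Term) (ts : List Term)
    (h : ∀ t ∈ ts, countUnk X (f t) = countUnk X t) :
    countUnkL X (ts.map f) = countUnkL X ts := by
  induction ts with
  | nil => simp [countUnkL]
  | cons u us ih =>
      simp only [List.map_cons, countUnkL]
      rw [h u (by simp), ih (fun t ht => h t (List.mem_cons_of_mem _ ht))]

theorem countUnk_renameT (τ : FinPerm) (X : Unknown) : ∀ t : Term,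
    countUnk X (renameT τ _root_.id t) = countUnk X t
  | .atom a => by simp [countUnk]
  | .var π Y => by simp [countUnk]
  | .abs a t => by simp [countUnk, countUnk_renameT τ X t]
  | .app f ts => by
      simp only [renameT_app, countUnk]
      exact countUnkL_congr X _ ts (fun t ht => countUnk_renameT τ X t)
decreasing_by
  all_goals simp_wf
  have := List.sizeOf_lt_of_mem ht
  omega

theorem subterm_renameT {τ : FinPerm} {u v : Term} (h : Subterm u v) :
    ∀ t : Term, v = renameT τ _root_.id t → ∃ u₀, Subterm u₀ t ∧ u = renameT τ _root_.id u₀ := by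
  induction h with
  | refl => intro t ht; exact ⟨t, Subterm.refl t, ht⟩
  | abs hsub ih =>
      intro t ht
      cases t with
      | abs a₀ t₀ =>
          simp only [renameT_abs, Term.abs.injEq] at ht
          obtain ⟨u₀, h1, h2⟩ := ih t₀ ht.2
          exact ⟨u₀, Subterm.abs h1, h2⟩
      | atom _ => simp at ht
      | var _ _ => simp at ht
      | app _ _ => simp at ht
  | app hmem hsub ih =>
      intro t ht
      cases t with
      | app f₀ ts =>
          simp only [renameT_app, Term.app.injEq] at ht
          rw [ht.2] at hmem
          obtain ⟨t₁, ht₁, rfl⟩ := List.mem_map.mp hmem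
          obtain ⟨u₀, h1, h2⟩ := ih t₁ rfl
          exact ⟨u₀, Subterm.app ht₁ h1, h2⟩
      | atom _ => simp at ht
      | var _ _ => simp at ht
      | abs _ _ => simp at ht

theorem mem_zip_self {α : Type*} {p : α × α} : ∀ {l : List α}, p ∈ l.zip l → p.1 = p.2 ∧ p.1 ∈ l
  | [], h => by simp at h
  | a :: l, h => by
      rcases List.mem_cons.mp h with h | h
      · subst h; exact ⟨rfl, by simp⟩
      · obtain ⟨h1, h2⟩ := mem_zip_self h
        exact ⟨h1, List.mem_cons_of_mem _ h2⟩

theorem aeq_refl (Δ : Ctx) : ∀ t : Term, Aeq Δ t t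
  | .atom a => .atom
  | .var π X => .var (fun a h => absurd rfl h)
  | .abs a t => .absSame (aeq_refl Δ t)
  | .app f ts => .app rfl (fun p hp => by
      obtain ⟨h1, h2⟩ := mem_zip_self hp
      rw [← h1]
      exact aeq_refl Δ p.1)
decreasing_by
  all_goals simp_wf
  have := List.sizeOf_lt_of_mem h2
  omega

/-! ### Monotonicity -/

theorem Fresh.mono {Δ Δ' : Ctx} (hsub : Δ ⊆ Δ') {a : Atom} {t : Term}
    (h : Fresh Δ a t) : Fresh Δ' a t := by
  induction h with
  | atom hab => exact .atom hab
  | var hmem => exact .var (hsub hmem)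
  | absSame => exact .absSame
  | absDiff hab _ ih => exact .absDiff hab ih
  | app _ ih => exact .app ih

theorem Aeq.mono {Δ Δ' : Ctx} (hsub : Δ ⊆ Δ') {s t : Term}
    (h : Aeq Δ s t) : Aeq Δ' s t := by
  induction h with
  | atom => exact .atom
  | var hmem => exact .var (fun a ha => hsub (hmem a ha))
  | absSame _ ih => exact .absSame ih
  | absDiff hab hf _ ih => exact .absDiff hab (hf.mono hsub) ih
  | app hlen _ ih => exact .app hlen ih

theorem RewEq.mono {Rw : Set Rule} {Δ Δ' : Ctx} (hsub : Δ ⊆ Δ') {s t : Term}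
    (h : RewEq Rw Δ s t) : RewEq Rw Δ' s t := by
  induction h with
  | step hstep =>
      obtain ⟨R, hR, C, s', π, θ, h1, h2, h3, h4⟩ := hstep
      exact .step ⟨R, hR, C, s', π, θ, h1,
        fun p hp => (h2 p hp).mono hsub, h3.mono hsub, h4.mono hsub⟩
  | alpha ha => exact .alpha (ha.mono hsub)
  | symm _ ih => exact ih.symm
  | trans _ _ ih1 ih2 => exact ih1.trans ih2

/-! ### Equivariance of freshness -/

theorem Fresh.perm {Δ : Ctx} {a : Atom} {t : Term} (π : FinPerm)
    (h : Fresh Δ a t) : Fresh Δ (π a) (permAct π t) := by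
  induction h with
  | atom hab =>
      rw [permAct_atom]
      exact .atom (fun hc => hab (π.apply_injective hc))
  | var hmem =>
      rename_i π' X
      rw [permAct_var]
      apply Fresh.var
      have : ((π.comp π').inv : Atom → Atom) ((π : Atom → Atom) a) = (π'.inv : Atom → Atom) a := by
        show (π'.1.trans π.1).symm _ = _
        simp [FinPerm.inv]
      rw [this]
      exact hmem
  | absSame => rw [permAct_abs]; exact .absSame
  | absDiff hab _ ih =>
      rw [permAct_abs]
      exact .absDiff (fun hc => hab (π.apply_injective hc)) ih
  | app _ ih =>
      rw [permAct_app]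
      apply Fresh.app
      intro t' ht'
      obtain ⟨u, hu, rfl⟩ := List.mem_map.mp ht'
      exact ih u hu

/-! ### Renaming of freshness and α-equivalence -/

theorem Fresh.rename {Δ : Ctx} {a : Atom} {t : Term} (τ : FinPerm) (ρ : Unknown → Unknown)
    (h : Fresh Δ a t) : Fresh (renameCtx τ ρ Δ) (τ a) (renameT τ ρ t) := by
  induction h with
  | atom hab =>
      rw [renameT_atom]
      exact .atom (fun hc => hab (τ.apply_injective hc))
  | var hmem =>
      rename_i π X
      rw [renameT_var]
      apply Fresh.var
      have : ((τ.comp (π.comp τ.inv)).inv : Atom → Atom) ((τ : Atom → Atom) a)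
          = (τ : Atom → Atom) ((π.inv : Atom → Atom) a) := by
        show (τ.comp (π.comp τ.inv)).1.symm _ = _
        rw [Equiv.symm_apply_eq]
        simp [FinPerm.comp, FinPerm.inv]
      rw [this]
      exact Finset.mem_image.mpr ⟨(π.inv a, X), hmem, rfl⟩
  | absSame => rw [renameT_abs]; exact .absSame
  | absDiff hab _ ih =>
      rw [renameT_abs]
      exact .absDiff (fun hc => hab (τ.apply_injective hc)) ih
  | app _ ih =>
      rw [renameT_app]
      apply Fresh.app
      intro t' ht'
      obtain ⟨u, hu, rfl⟩ := List.mem_map.mp ht'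
      exact ih u hu

theorem Aeq.rename {Δ : Ctx} {s t : Term} (τ : FinPerm) (ρ : Unknown → Unknown)
    (h : Aeq Δ s t) : Aeq (renameCtx τ ρ Δ) (renameT τ ρ s) (renameT τ ρ t) := by
  induction h with
  | atom => rw [renameT_atom]; exact .atom
  | var hmem =>
      rename_i π π' X
      rw [renameT_var, renameT_var]
      apply Aeq.var
      intro a ha
      simp only [FinPerm.comp_apply] at ha
      have hne : (π : Atom → Atom) ((τ.inv : Atom → Atom) a) ≠ (π' : Atom → Atom) ((τ.inv : Atom → Atom) a) := by
        intro hc; exact ha (by rw [hc])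
      have := hmem _ hne
      refine Finset.mem_image.mpr ⟨_, this, ?_⟩
      simp
  | absSame _ ih => rw [renameT_abs, renameT_abs]; exact .absSame ih
  | absDiff hab hf _ ih =>
      rw [renameT_abs, renameT_abs]
      apply Aeq.absDiff (fun hc => hab (τ.apply_injective hc)) (hf.rename τ ρ)
      rw [renameT_permAct] at ih
      rwa [FinPerm.comp_swap] at ih
  | app hlen _ ih =>
      rw [renameT_app, renameT_app]
      apply Aeq.app (by simp [hlen])
      intro p hp
      rw [List.zip_map] at hp
      obtain ⟨q, hq, rfl⟩ := List.mem_map.mp hp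
      exact ih q hq

/-! ### A permutation pushing a finite set of atoms up by `N` -/

def swapUpFun (B : Finset ℕ) (N : ℕ) (x : ℕ) : ℕ :=
  if x ∈ B then x + N else if N ≤ x ∧ x - N ∈ B then x - N else x

theorem swapUpFun_involutive (B : Finset ℕ) (N : ℕ) (hB : ∀ b ∈ B, b < N) :
    Function.Involutive (swapUpFun B N) := by
  intro x
  unfold swapUpFun
  by_cases h1 : x ∈ B
  · have hx : x < N := hB _ h1
    simp only [h1, if_pos]
    have h2 : x + N ∉ B := fun hc => by have := hB _ hc; omega
    simp only [h2, if_neg, if_false]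
    have h3 : N ≤ x + N ∧ x + N - N ∈ B := ⟨by omega, by simpa using h1⟩
    rw [if_pos h3]
    omega
  · rw [if_neg h1]
    by_cases h2 : N ≤ x ∧ x - N ∈ B
    · rw [if_pos h2]
      rw [if_pos h2.2]
      omega
    · rw [if_neg h2, if_neg h1, if_neg h2]

noncomputable def swapUp (B : Finset ℕ) (N : ℕ) (hB : ∀ b ∈ B, b < N) : FinPerm :=
  ⟨(swapUpFun_involutive B N hB).toPerm, by
    apply Set.Finite.subset (Set.Finite.union B.finite_toSet (B.image (· + N)).finite_toSet)
    intro x hx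
    simp only [Set.mem_setOf_eq] at hx
    have : swapUpFun B N x ≠ x := hx
    unfold swapUpFun at this
    by_cases h1 : x ∈ B
    · exact Or.inl h1
    · rw [if_neg h1] at this
      by_cases h2 : N ≤ x ∧ x - N ∈ B
      · right
        simp only [Finset.coe_image, Set.mem_image]
        exact ⟨x - N, h2.2, by omega⟩
      · rw [if_neg h2] at this; exact absurd rfl this⟩

theorem swapUp_coe (B : Finset ℕ) (N : ℕ) (hB : ∀ b ∈ B, b < N) (x : ℕ) :
    (swapUp B N hB : Atom → Atom) x = swapUpFun B N x := rfl

theorem swapUp_mem {B : Finset ℕ} {N : ℕ} {hB : ∀ b ∈ B, b < N} {b : ℕ} (h : b ∈ B) :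
    (swapUp B N hB : Atom → Atom) b = b + N := by
  rw [swapUp_coe]; unfold swapUpFun; rw [if_pos h]

theorem swapUp_fix {B : Finset ℕ} {N : ℕ} {hB : ∀ b ∈ B, b < N} {x : ℕ}
    (h1 : x ∉ B) (h2 : x < N) : (swapUp B N hB : Atom → Atom) x = x := by
  rw [swapUp_coe]; unfold swapUpFun
  rw [if_neg h1, if_neg (by omega)]

/-! ### Renaming positions and contexts -/

noncomputable def Position.rename (τ : FinPerm) (C : Position) : Position where
  ctx := renameT τ _root_.id C.ctx
  hole := C.hole
  once := by rw [countUnk_renameT]; exact C.once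
  idOnly := by
    intro π hsub
    obtain ⟨u₀, h1, h2⟩ := subterm_renameT hsub C.ctx rfl
    cases u₀ with
    | var π₀ X₀ =>
        simp only [renameT_var, Term.var.injEq] at h2
        have hid : π₀ = FinPerm.id := C.idOnly π₀ (by
          have : X₀ = C.hole := h2.2.symm
          rwa [this] at h1)
        subst hid
        rw [h2.1]
        apply FinPerm.ext
        intro x
        simp
    | atom _ => simp at h2
    | abs _ _ => simp at h2
    | app _ _ => simp at h2

theorem Position.rename_fill (τ : FinPerm) (C : Position) (u : Term) :
    renameT τ _root_.id (C.fill u) = (C.rename τ).fill (renameT τ _root_.id u) := by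
  unfold Position.fill Position.rename
  exact renameT_fillAux τ C.hole u C.ctx

theorem renameCtx_fix {τ : FinPerm} {Δ : Ctx} (h : ∀ p ∈ Δ, (τ : Atom → Atom) p.1 = p.1) :
    renameCtx τ _root_.id Δ = Δ := by
  unfold renameCtx
  rw [show (fun p : Atom × Unknown => ((τ : Atom → Atom) p.1, _root_.id p.2))
      = fun p : Atom × Unknown => ((τ : Atom → Atom) p.1, p.2) from rfl]
  rw [Finset.image_congr (g := _root_.id) (fun p hp => by
    simp only [Finset.mem_coe] at hp
    simp [h p hp])]
  exact Finset.image_id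

theorem renameCtx_union (τ : FinPerm) (ρ : Unknown → Unknown) (Δ Γ : Ctx) :
    renameCtx τ ρ (Δ ∪ Γ) = renameCtx τ ρ Δ ∪ renameCtx τ ρ Γ :=
  Finset.image_union _ _

theorem judgeAtms_comm (Δ : Ctx) (s t : Term) : judgeAtms Δ t s = judgeAtms Δ s t := by
  unfold judgeAtms
  ext x
  simp only [Finset.mem_union]
  tauto

/-! ### The axiom case -/

theorem axm_case (Rw T : Set Rule) (hpres : Presents Rw T) (Δ : Ctx) (s t : Term)
    (R : Rule) (hR : R ∈ T) (Γ : Ctx) (C : Position) (π : FinPerm) (θ : Subst)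
    (hΓ : FreshFor Γ (judgeAtms Δ s t)) (hθ : FreshSubst (Δ ∪ Γ) R.ctx θ)
    (h3 : Aeq (Δ ∪ Γ) s (C.fill (permAct π (subst θ R.lhs))))
    (h4 : Aeq (Δ ∪ Γ) (C.fill (permAct π (subst θ R.rhs))) t)
    (A : Finset Atom) :
    ∃ Γ' : Ctx, FreshFor Γ' (judgeAtms Δ s t ∪ A) ∧ RewEq Rw (Δ ∪ Γ') s t := by
  classical
  set S : Finset Atom := judgeAtms Δ s t with hS
  set B : Finset Atom := ctxAtoms Γ with hBdef
  obtain ⟨N, hlt⟩ : ∃ N : ℕ, ∀ x ∈ S ∪ A ∪ B, x < N :=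
    ⟨(S ∪ A ∪ B).sup _root_.id + 1, fun x hx => by
      have := Finset.le_sup (f := _root_.id) hx
      simp only [id_eq] at this
      exact Nat.lt_succ_of_le this⟩
  have hB : ∀ b ∈ B, b < N := fun b hb => hlt b (by simp [Finset.mem_union, hb])
  set τ : FinPerm := swapUp B N hB with hτ
  have hfixS : ∀ a ∈ S, (τ : Atom → Atom) a = a := by
    intro a ha
    apply swapUp_fix
    · intro hab
      obtain ⟨p, hp, rfl⟩ := Finset.mem_image.mp hab
      exact hΓ p hp ha
    · exact hlt a (by simp [Finset.mem_union, ha])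
  have hsmem : ∀ a ∈ atmsF s, a ∈ S := by
    intro a ha
    simp only [hS, judgeAtms, Finset.mem_union]
    tauto
  have htmem : ∀ a ∈ atmsF t, a ∈ S := by
    intro a ha
    simp only [hS, judgeAtms, Finset.mem_union]
    tauto
  have hΔmem : ∀ a ∈ ctxAtoms Δ, a ∈ S := by
    intro a ha
    simp only [hS, judgeAtms, Finset.mem_union]
    tauto
  set θ'' : Subst := fun X => permAct τ.inv (renameT τ _root_.id (θ X)) with hθ''
  set Γ' : Ctx := renameCtx τ _root_.id Γ with hΓ'
  have hctx : renameCtx τ _root_.id (Δ ∪ Γ) = Δ ∪ Γ' := by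
    rw [renameCtx_union]
    congr 1
    apply renameCtx_fix
    intro p hp
    exact hfixS p.1 (hΔmem p.1 (Finset.mem_image.mpr ⟨p, hp, rfl⟩))
  have hfreshΓ' : FreshFor Γ' (S ∪ A) := by
    intro p' hp'
    obtain ⟨p, hp, rfl⟩ := Finset.mem_image.mp hp'
    have hmem : p.1 ∈ B := Finset.mem_image.mpr ⟨p, hp, rfl⟩
    show (τ : Atom → Atom) p.1 ∉ S ∪ A
    rw [swapUp_mem hmem]
    intro hc
    have := hlt _ (Finset.mem_union_left _ hc)
    exact (Nat.not_lt.mpr (Nat.le_add_left N p.1)) this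
  have hkey : ∀ l : Term, renameT τ _root_.id (C.fill (permAct π (subst θ l)))
      = (C.rename τ).fill (permAct (τ.comp π) (subst θ'' l)) := by
    intro l
    rw [Position.rename_fill, renameT_permAct, renameT_subst, permAct_comp]
    have heq : (τ.comp (π.comp τ.inv)).comp τ = τ.comp π := by
      apply FinPerm.ext
      intro x
      simp
    rw [heq]
  have e1 : Aeq (Δ ∪ Γ') s ((C.rename τ).fill (permAct (τ.comp π) (subst θ'' R.lhs))) := by
    have h := h3.rename τ _root_.id
    rw [hctx, hkey, renameT_fix τ s (fun a ha => hfixS a (hsmem a ha))] at h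
    exact h
  have e4 : Aeq (Δ ∪ Γ') ((C.rename τ).fill (permAct (τ.comp π) (subst θ'' R.rhs))) t := by
    have h := h4.rename τ _root_.id
    rw [hctx, hkey, renameT_fix τ t (fun a ha => hfixS a (htmem a ha))] at h
    exact h
  have fs : FreshSubst (Δ ∪ Γ') R.ctx θ'' := by
    intro p hp
    have h0 := hθ p hp
    rw [subst_var, permAct_id] at h0
    have h1 := h0.rename τ _root_.id
    rw [hctx] at h1
    have h2 := h1.perm τ.inv
    rw [subst_var, permAct_id]
    show Fresh (Δ ∪ Γ') p.1 (permAct τ.inv (renameT τ _root_.id (θ p.2)))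
    have : (τ.inv : Atom → Atom) ((τ : Atom → Atom) p.1) = p.1 := by simp
    rwa [this] at h2
  refine ⟨Γ', hfreshΓ', ?_⟩
  rcases (hpres R).mp hR with hRw | hRw
  · exact (RewEq.alpha e1).trans ((RewEq.step ⟨R, hRw, C.rename τ,
      permAct (τ.comp π) (subst θ'' R.lhs), τ.comp π, θ'', rfl, fs,
      aeq_refl _ _, aeq_refl _ _⟩).trans (.alpha e4))
  · exact (RewEq.alpha e1).trans (((RewEq.step ⟨⟨R.ctx, R.rhs, R.lhs⟩, hRw, C.rename τ,
      permAct (τ.comp π) (subst θ'' R.rhs), τ.comp π, θ'', rfl, fs,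
      aeq_refl _ _, aeq_refl _ _⟩).symm).trans (.alpha e4))

theorem alg_to_rew (Rw T : Set Rule) (hpres : Presents Rw T) (Δ : Ctx) (s t : Term)
    (h : AlgEq T Δ s t) :
    ∀ A : Finset Atom, ∃ Γ : Ctx, FreshFor Γ (judgeAtms Δ s t ∪ A) ∧ RewEq Rw (Δ ∪ Γ) s t := by
  induction h with
  | axm R hR Γ C π θ hΓ hθ h3 h4 =>
      intro A
      exact axm_case Rw T hpres Δ _ _ R hR Γ C π θ hΓ hθ h3 h4 A
  | refl u =>
      intro A
      exact ⟨∅, fun p hp => absurd hp (Finset.notMem_empty p), .alpha (aeq_refl _ _)⟩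
  | symm _ ih =>
      intro A
      obtain ⟨Γ, h1, h2⟩ := ih A
      rw [judgeAtms_comm] at h1
      exact ⟨Γ, h1, h2.symm⟩
  | @trans s₁ t₁ u₁ _ _ ih1 ih2 =>
      intro A
      obtain ⟨Γ₁, hf1, hr1⟩ := ih1 (A ∪ atmsF u₁)
      obtain ⟨Γ₂, hf2, hr2⟩ := ih2 (A ∪ atmsF s₁)
      refine ⟨Γ₁ ∪ Γ₂, ?_, ?_⟩
      · intro p hp
        rcases Finset.mem_union.mp hp with hp | hp
        · have := hf1 p hp
          simp only [judgeAtms, Finset.mem_union, not_or] at this ⊢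
          tauto
        · have := hf2 p hp
          simp only [judgeAtms, Finset.mem_union, not_or] at this ⊢
          tauto
      · have sub1 : Δ ∪ Γ₁ ⊆ Δ ∪ (Γ₁ ∪ Γ₂) :=
          Finset.union_subset_union_right Finset.subset_union_left
        have sub2 : Δ ∪ Γ₂ ⊆ Δ ∪ (Γ₁ ∪ Γ₂) :=
          Finset.union_subset_union_right Finset.subset_union_right
        exact (hr1.mono sub1).trans (hr2.mono sub2)


/-- Quasi-completeness of nominal rewriting: if `R` presents `T` and `Δ ⊢_T s = t`, then
there is a fresh context `Γ` (atoms avoiding `atms(Δ,s,t)`) with `Δ ∪ Γ ⊢_R s ↔* t`. -/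
theorem rew_quasi_complete (Rw T : Set Rule) (hpres : Presents Rw T)
    (Δ : Ctx) (s t : Term) (h : AlgEq T Δ s t) :
    ∃ Γ : Ctx, FreshFor Γ (judgeAtms Δ s t) ∧ RewEq Rw (Δ ∪ Γ) s t := by
  obtain ⟨Γ, h1, h2⟩ := alg_to_rew Rw T hpres Δ s t h ∅
  rw [Finset.union_empty] at h1
  exact ⟨Γ, h1, h2⟩
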